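/- Let A be a ring and I a two-sided idempotent ideal of A such that ann_M(I) is a direct summand of M for every right A-module M. Then the following are equivalent: (1) the class {M : M is a right A-module with MI = M} is closed under arbitrary direct products; (2) I = Ae for some idempotent e ∈ A; (3) the right A-module A/I admits a projective cover; (4) I is finitely generated as a left ideal of A. -/

import Mathlib

open MulOpposite

variable (A : Type) [Ring A]

/-- `ann_M(I) = {m ∈ M | m·a = 0 for all a ∈ I}` as a submodule of the right `A`-module `M`. -/
def rAnn (I : Ideal A) (M : Type) [AddCommGroup M] [Module Aᵐᵒᵖ M] :
    Submodule Aᵐᵒᵖ M where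
  carrier := {m : M | ∀ a ∈ I, op a • m = 0}
  add_mem' := by
    intro x y hx hy a ha
    rw [smul_add, hx a ha, hy a ha, add_zero]
  zero_mem' := by
    intro a _
    rw [smul_zero]
  smul_mem' := by
    intro c m hm a ha
    rw [smul_smul]
    have h1 : op a * c = op (c.unop * a) := by
      rw [op_mul, op_unop]
    rw [h1]
    exact hm (c.unop * a) (I.mul_mem_left c.unop ha)

namespace Stmt7Aux

variable {A : Type} [Ring A]

theorem op_smul_eq (a x : A) : (op a) • x = x * a := rfl

/-- MASTER lemma: if `m ∈ YI` then `m = m·z` for some `z ∈ I`. -/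
theorem master (I : Ideal A) (hright : ∀ a ∈ I, ∀ b : A, a * b ∈ I)
    (hsplit : ∀ (M : Type) [AddCommGroup M] [Module Aᵐᵒᵖ M],
      ∃ N' : Submodule Aᵐᵒᵖ M, rAnn A I M ⊓ N' = ⊥ ∧ rAnn A I M ⊔ N' = ⊤)
    (Y : Type) [AddCommGroup Y] [Module Aᵐᵒᵖ Y] (m : Y)
    (hm : m ∈ Submodule.span Aᵐᵒᵖ {x : Y | ∃ (m' : Y) (a : A), a ∈ I ∧ x = op a • m'}) :
    ∃ z ∈ I, op z • m = m := by
  classical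
  set Nm : Submodule Aᵐᵒᵖ Y :=
    { carrier := {x | ∃ a ∈ I, x = op a • m}
      add_mem' := by
        rintro x y ⟨a, ha, rfl⟩ ⟨b, hb, rfl⟩
        exact ⟨a + b, I.add_mem ha hb, by rw [op_add, add_smul]⟩
      zero_mem' := ⟨0, I.zero_mem, by rw [op_zero, zero_smul]⟩
      smul_mem' := by
        rintro c x ⟨a, ha, rfl⟩
        refine ⟨a * c.unop, hright a ha c.unop, ?_⟩
        rw [smul_smul, op_mul, op_unop] } with hNm
  obtain ⟨N', hbot, htop⟩ := hsplit (Y ⧸ Nm)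
  have h1 : Nm.mkQ m ∈ rAnn A I (Y ⧸ Nm) := by
    intro a ha
    rw [← map_smul, Submodule.mkQ_apply, Submodule.Quotient.mk_eq_zero]
    exact ⟨a, ha, rfl⟩
  have h2 : Nm.mkQ m ∈ N' := by
    have himg : Nm.mkQ m ∈ Submodule.span Aᵐᵒᵖ
        {x : Y ⧸ Nm | ∃ (m' : Y ⧸ Nm) (a : A), a ∈ I ∧ x = op a • m'} := by
      have hmap : Nm.mkQ m ∈ Submodule.map Nm.mkQ
          (Submodule.span Aᵐᵒᵖ {x : Y | ∃ (m' : Y) (a : A), a ∈ I ∧ x = op a • m'}) :=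
        Submodule.mem_map_of_mem hm
      rw [Submodule.map_span] at hmap
      refine Submodule.span_mono ?_ hmap
      rintro x ⟨y, ⟨m', a, ha, rfl⟩, rfl⟩
      exact ⟨Nm.mkQ m', a, ha, by rw [map_smul]⟩
    refine Submodule.span_le.mpr ?_ himg
    rintro x ⟨q, a, ha, rfl⟩
    have hq : q ∈ rAnn A I (Y ⧸ Nm) ⊔ N' := htop ▸ Submodule.mem_top
    obtain ⟨s, hs, n, hn, rfl⟩ := Submodule.mem_sup.mp hq
    rw [smul_add, hs a ha, zero_add]
    exact N'.smul_mem _ hn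
  have h3 : Nm.mkQ m = 0 := by
    have : Nm.mkQ m ∈ rAnn A I (Y ⧸ Nm) ⊓ N' := ⟨h1, h2⟩
    rw [hbot, Submodule.mem_bot] at this
    exact this
  rw [Submodule.mkQ_apply, Submodule.Quotient.mk_eq_zero] at h3
  obtain ⟨z, hz, hzm⟩ := h3
  exact ⟨z, hz, hzm.symm⟩

/-- pointwise right units in `I` -/
theorem punit (I : Ideal A) (hright : ∀ a ∈ I, ∀ b : A, a * b ∈ I)
    (hsplit : ∀ (M : Type) [AddCommGroup M] [Module Aᵐᵒᵖ M],
      ∃ N' : Submodule Aᵐᵒᵖ M, rAnn A I M ⊓ N' = ⊥ ∧ rAnn A I M ⊔ N' = ⊤)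
    (c : A) (hc : c ∈ I) : ∃ z ∈ I, c * z = c := by
  obtain ⟨z, hz, hzc⟩ := master I hright hsplit A c
    (Submodule.subset_span ⟨1, c, hc, by rw [op_smul_eq, one_mul]⟩)
  exact ⟨z, hz, hzc⟩

/-- joint right units in `I` -/
theorem junit (I : Ideal A) (hright : ∀ a ∈ I, ∀ b : A, a * b ∈ I)
    (hsplit : ∀ (M : Type) [AddCommGroup M] [Module Aᵐᵒᵖ M],
      ∃ N' : Submodule Aᵐᵒᵖ M, rAnn A I M ⊓ N' = ⊥ ∧ rAnn A I M ⊔ N' = ⊤)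
    (x b : A) (hx : x ∈ I) (hb : b ∈ I) :
    ∃ e ∈ I, x * e = x ∧ b * e = b := by
  obtain ⟨e₁, he₁, hxe₁⟩ := punit I hright hsplit x hx
  have hc : b - b * e₁ ∈ I := I.sub_mem hb (hright b hb e₁)
  obtain ⟨e₂, he₂, hce₂⟩ := punit I hright hsplit (b - b * e₁) hc
  refine ⟨e₁ + e₂ - e₁ * e₂, I.sub_mem (I.add_mem he₁ he₂) (hright e₁ he₁ e₂), ?_, ?_⟩
  · have : x * (e₁ * e₂) = x * e₂ := by rw [← mul_assoc, hxe₁]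
    rw [mul_sub, mul_add, this, hxe₁]
    abel
  · have h2 : (b - b * e₁) * e₂ = b - b * e₁ := hce₂
    have : b * (e₁ * e₂) = b * e₁ * e₂ := by rw [mul_assoc]
    rw [mul_sub, mul_add, this]
    have h3 : b * e₂ - b * e₁ * e₂ = b - b * e₁ := by
      rw [← sub_mul]; exact hce₂
    calc b * e₁ + b * e₂ - b * e₁ * e₂ = b * e₁ + (b * e₂ - b * e₁ * e₂) := by abel
    _ = b * e₁ + (b - b * e₁) := by rw [h3]
    _ = b := by abel

theorem mem_spanI (I : Ideal A) (hright : ∀ a ∈ I, ∀ b : A, a * b ∈ I) (x : A) :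
    x ∈ Submodule.span Aᵐᵒᵖ (I : Set A) ↔ x ∈ I := by
  constructor
  · intro hx
    refine Submodule.span_induction (p := fun y _ => y ∈ I) (fun y hy => hy) I.zero_mem
      (fun y z _ _ hy hz => I.add_mem hy hz) (fun c y _ hy => ?_) hx
    show (y * c.unop) ∈ I
    exact hright y hy c.unop
  · exact fun hx => Submodule.subset_span hx

theorem four_to_two (I : Ideal A) (hright : ∀ a ∈ I, ∀ b : A, a * b ∈ I)
    (punit : ∀ c ∈ I, ∃ z ∈ I, c * z = c) (h4 : I.FG) :
    ∃ e : A, IsIdempotentElem e ∧ (I : Set A) = {x : A | ∃ a : A, x = a * e} := by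
  classical
  obtain ⟨s, hs⟩ := h4
  have hsub : (↑s : Set A) ⊆ I := hs ▸ Submodule.subset_span
  have key : ∀ (t : Finset A), (↑t : Set A) ⊆ (I : Set A) → ∃ e ∈ I, ∀ x ∈ t, x * e = x := by
    intro t
    induction t using Finset.induction_on with
    | empty => exact fun _ => ⟨0, I.zero_mem, by simp⟩
    | @insert a t' hnm ih =>
      intro hsub'
      have haI : a ∈ I := hsub' (Finset.mem_coe.mpr (Finset.mem_insert_self a t'))
      have ht' : (↑t' : Set A) ⊆ (I : Set A) := fun y hy =>
        hsub' (Finset.mem_coe.mpr (Finset.mem_insert_of_mem (Finset.mem_coe.mp hy)))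
      obtain ⟨e₁, he₁, h₁⟩ := ih ht'
      have hcI : a - a * e₁ ∈ I := I.sub_mem haI (hright a haI e₁)
      obtain ⟨e₂, he₂, h₂⟩ := punit (a - a * e₁) hcI
      refine ⟨e₁ + e₂ - e₁ * e₂,
        I.sub_mem (I.add_mem he₁ he₂) (hright e₁ he₁ e₂), ?_⟩
      intro x hx
      rcases Finset.mem_insert.mp hx with rfl | hx'
      · have h3 : x * (e₁ * e₂) = x * e₁ * e₂ := by rw [mul_assoc]
        have h4 : x * e₂ - x * e₁ * e₂ = x - x * e₁ := by rw [← sub_mul]; exact h₂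
        calc x * (e₁ + e₂ - e₁ * e₂) = x * e₁ + (x * e₂ - x * (e₁ * e₂)) := by
              rw [mul_sub, mul_add]; abel
        _ = x * e₁ + (x - x * e₁) := by rw [h3, h4]
        _ = x := by abel
      · have hxe₁ : x * e₁ = x := h₁ x hx'
        have h3 : x * (e₁ * e₂) = x * e₂ := by rw [← mul_assoc, hxe₁]
        calc x * (e₁ + e₂ - e₁ * e₂) = x * e₁ + x * e₂ - x * (e₁ * e₂) := by
              rw [mul_sub, mul_add]
        _ = x := by rw [h3, hxe₁]; abel
  obtain ⟨e, heI, he⟩ := key s hsub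
  have hIe : ∀ x ∈ I, x * e = x := by
    intro x hx
    have hx' : x ∈ Ideal.span (↑s : Set A) := by rw [hs]; exact hx
    refine Submodule.span_induction (p := fun y _ => y * e = y)
      (fun y hy => he y (Finset.mem_coe.mp hy)) (by show (0:A) * e = 0; rw [zero_mul])
      (fun y z _ _ hy hz => by
        show (y + z) * e = y + z
        rw [add_mul, show y * e = y from hy, show z * e = z from hz])
      (fun c y _ hy => ?_) hx'
    show (c * y) * e = c * y
    rw [mul_assoc, show y * e = y from hy]
  refine ⟨e, hIe e heI, ?_⟩
  ext x
  constructor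
  · intro hx
    exact ⟨x, (hIe x hx).symm⟩
  · rintro ⟨a, rfl⟩
    exact I.mul_mem_left a heI


theorem two_to_one (I : Ideal A) (hright : ∀ a ∈ I, ∀ b : A, a * b ∈ I)
    (h2 : ∃ e : A, IsIdempotentElem e ∧ (I : Set A) = {x : A | ∃ a : A, x = a * e}) :
    ∀ (ι : Type) (M : ι → Type) [∀ i, AddCommGroup (M i)] [∀ i, Module Aᵐᵒᵖ (M i)],
      (∀ i, Submodule.span Aᵐᵒᵖ
          {x : M i | ∃ (m : M i) (a : A), a ∈ I ∧ x = op a • m} = ⊤) →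
      Submodule.span Aᵐᵒᵖ
          {x : (∀ i, M i) | ∃ (m : ∀ i, M i) (a : A), a ∈ I ∧ x = op a • m} = ⊤ := by
  obtain ⟨e, hee, hset⟩ := h2
  have heI : e ∈ I := by
    have := (Set.ext_iff.mp hset e).mpr ⟨1, (one_mul e).symm⟩
    exact this
  have hIe : ∀ x ∈ I, x * e = x := by
    intro x hx
    obtain ⟨a, rfl⟩ := (Set.ext_iff.mp hset x).mp hx
    rw [mul_assoc, hee]
  intro ι M _ _ hM
  have hfix : ∀ (i : ι) (y : M i), op e • y = y := by
    intro i y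
    have hy : y ∈ Submodule.span Aᵐᵒᵖ {x : M i | ∃ m a, a ∈ I ∧ x = op a • m} :=
      (hM i) ▸ Submodule.mem_top
    refine Submodule.span_induction (p := fun z _ => op e • z = z) ?_ (smul_zero _)
      (fun z w _ _ hz hw => by
        show op e • (z + w) = z + w
        rw [smul_add, show op e • z = z from hz, show op e • w = w from hw])
      (fun c z _ hz => ?_) hy
    · rintro x ⟨m, a, ha, rfl⟩
      rw [smul_smul, ← op_mul, hIe a ha]
    · show op e • (c • z) = c • z
      have hz' : op e • z = z := hz
      have h2' : e * (c.unop * e) = e * c.unop := by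
        rw [← mul_assoc]
        exact hIe (e * c.unop) (hright e heI c.unop)
      calc op e • (c • z) = (op (c.unop * e)) • z := by rw [smul_smul]; rfl
      _ = (op (c.unop * e)) • (op e • z) := by rw [hz']
      _ = (op (e * (c.unop * e))) • z := by rw [smul_smul, ← op_mul]
      _ = (op (e * c.unop)) • z := by rw [h2']
      _ = (op c.unop) • (op e • z) := by rw [smul_smul, ← op_mul]
      _ = c • z := by rw [hz', op_unop]
  rw [Submodule.eq_top_iff']
  intro m
  have hm : m = op e • m := by
    funext i
    exact (hfix i (m i)).symm
  exact Submodule.subset_span ⟨m, e, heI, hm⟩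


theorem projA : Module.Projective Aᵐᵒᵖ A := by
  have e : A ≃ₗ[Aᵐᵒᵖ] Aᵐᵒᵖ :=
    { toFun := op
      invFun := unop
      map_add' := fun x y => by rw [op_add]
      map_smul' := fun r x => by
        show op (x * r.unop) = r • op x
        rw [op_mul, op_unop]
        rfl
      left_inv := fun x => rfl
      right_inv := fun x => rfl }
  exact Module.Projective.of_split e.toLinearMap e.symm.toLinearMap (by ext x; simp)

theorem two_to_three (I : Ideal A) (hright : ∀ a ∈ I, ∀ b : A, a * b ∈ I)
    (h2 : ∃ e : A, IsIdempotentElem e ∧ (I : Set A) = {x : A | ∃ a : A, x = a * e}) :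
    ∃ (P : ModuleCat.{u} Aᵐᵒᵖ)
      (p : P →ₗ[Aᵐᵒᵖ] (A ⧸ Submodule.span Aᵐᵒᵖ (I : Set A))),
      Module.Projective Aᵐᵒᵖ P ∧ Function.Surjective p ∧
      ∀ N : Submodule Aᵐᵒᵖ P, LinearMap.ker p ⊔ N = ⊤ → N = ⊤ := by
  classical
  obtain ⟨e, hee, hset⟩ := h2
  have heI : e ∈ I := (Set.ext_iff.mp hset e).mpr ⟨1, (one_mul e).symm⟩
  have hIe : ∀ x ∈ I, x * e = x := by
    intro x hx
    obtain ⟨a, rfl⟩ := (Set.ext_iff.mp hset x).mp hx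
    rw [mul_assoc, hee]
  set spanI := Submodule.span Aᵐᵒᵖ (I : Set A) with hspanIdef
  have hmemspan : ∀ x : A, x ∈ spanI ↔ x ∈ I := by
    intro x
    constructor
    · intro hx
      refine Submodule.span_induction (p := fun y _ => y ∈ I) (fun y hy => hy) I.zero_mem
        (fun y z _ _ hy hz => I.add_mem hy hz) (fun c y _ hy => ?_) hx
      show (y * c.unop) ∈ I
      exact hright y hy c.unop
    · exact fun hx => Submodule.subset_span hx
  set P₀ : Submodule Aᵐᵒᵖ A :=
    { carrier := {y : A | e * y = 0}
      add_mem' := by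
        intro x y hx hy
        show e * (x + y) = 0
        rw [mul_add, hx, hy, add_zero]
      zero_mem' := by show e * 0 = 0; rw [mul_zero]
      smul_mem' := by
        intro c x hx
        show e * (x * c.unop) = 0
        rw [← mul_assoc, hx, zero_mul] } with hP₀
  have hmemP₀ : ∀ y : A, y ∈ P₀ ↔ e * y = 0 := fun y => Iff.rfl
  set μ : (ULift.{u} ↥P₀) ≃ₗ[Aᵐᵒᵖ] ↥P₀ := ULift.moduleEquiv with hμ
  set p : (ULift.{u} ↥P₀) →ₗ[Aᵐᵒᵖ] (A ⧸ spanI) :=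
    (spanI.mkQ.comp P₀.subtype).comp μ.toLinearMap with hp
  have hsub : ∀ (x : A), e * (x - e * x) = 0 := by
    intro x
    rw [mul_sub, ← mul_assoc, hee.eq, sub_self]
  set s₀ : A →ₗ[Aᵐᵒᵖ] ↥P₀ :=
    { toFun := fun x => (⟨x - e * x, hsub x⟩ : ↥P₀)
      map_add' := fun x y => by
        apply Subtype.ext
        show (x + y) - e * (x + y) = (x - e * x) + (y - e * y)
        rw [mul_add]; abel
      map_smul' := fun c x => by
        apply Subtype.ext
        show (x * c.unop) - e * (x * c.unop) = (x - e * x) * c.unop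
        rw [sub_mul, mul_assoc] } with hs₀def
  have hs₀ : ∀ x : A, ((s₀ x : ↥P₀) : A) = x - e * x := fun x => rfl
  refine ⟨ModuleCat.of Aᵐᵒᵖ (ULift.{u} ↥P₀), p, ?_, ?_, ?_⟩
  · haveI : Module.Projective Aᵐᵒᵖ A := projA
    refine Module.Projective.of_split (P₀.subtype.comp μ.toLinearMap)
      (μ.symm.toLinearMap.comp s₀) ?_
    refine LinearMap.ext fun x => ?_
    apply μ.injective
    show μ ((μ.symm.toLinearMap.comp s₀) ((P₀.subtype.comp μ.toLinearMap) x)) = μ x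
    rw [LinearMap.comp_apply, LinearMap.comp_apply, LinearEquiv.coe_toLinearMap,
      LinearEquiv.coe_toLinearMap, μ.apply_symm_apply]
    apply Subtype.ext
    rw [hs₀]
    show ((μ x : ↥P₀) : A) - e * ((μ x : ↥P₀) : A) = ((μ x : ↥P₀) : A)
    rw [(μ x).2, sub_zero]
  · intro y
    obtain ⟨x, rfl⟩ := Submodule.mkQ_surjective spanI y
    refine ⟨μ.symm ⟨x - e * x, hsub x⟩, ?_⟩
    show spanI.mkQ ((P₀.subtype) (μ (μ.symm ⟨x - e * x, hsub x⟩))) = spanI.mkQ x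
    rw [μ.apply_symm_apply]
    show spanI.mkQ (x - e * x) = spanI.mkQ x
    rw [map_sub, sub_eq_self, Submodule.mkQ_apply, Submodule.Quotient.mk_eq_zero]
    exact (hmemspan (e * x)).mpr (hright e heI x)
  · intro N hN
    have hm₀mem : e * (1 - e) = 0 := by rw [mul_sub, mul_one, hee.eq, sub_self]
    set m₀ : ↥P₀ := ⟨1 - e, hm₀mem⟩ with hm₀
    set m₀' : ULift.{u} ↥P₀ := μ.symm m₀ with hm₀'
    have hμm₀' : μ m₀' = m₀ := μ.apply_symm_apply m₀
    have hm₀top : m₀' ∈ LinearMap.ker p ⊔ N := hN ▸ Submodule.mem_top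
    obtain ⟨k, hk, n, hn, heq⟩ := Submodule.mem_sup.mp hm₀top
    have hkI : ((μ k : ↥P₀) : A) ∈ I := by
      have h0 : p k = 0 := hk
      have : spanI.mkQ ((μ k : ↥P₀) : A) = 0 := h0
      rw [Submodule.mkQ_apply, Submodule.Quotient.mk_eq_zero] at this
      exact (hmemspan _).mp this
    have hke : ((μ k : ↥P₀) : A) * e = ((μ k : ↥P₀) : A) := hIe _ hkI
    have hval : ((μ k : ↥P₀) : A) + ((μ n : ↥P₀) : A) = 1 - e := by
      have h1 : μ k + μ n = m₀ := by rw [← map_add, heq, hμm₀']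
      have := congrArg (Subtype.val) h1
      exact this
    have hm₀e : (1 - e) * e = 0 := by rw [sub_mul, one_mul, hee.eq, sub_self]
    have hkn : ((μ k : ↥P₀) : A) = -(((μ n : ↥P₀) : A) * e) := by
      have h1 : ((μ k : ↥P₀) : A) * e + ((μ n : ↥P₀) : A) * e = 0 := by
        rw [← add_mul, hval, hm₀e]
      rw [hke] at h1
      exact eq_neg_of_add_eq_zero_left h1
    have hkN : k ∈ N := by
      have hkeq : k = -(op e • n) := by
        apply μ.injective
        rw [map_neg, map_smul]
        apply Subtype.ext
        show ((μ k : ↥P₀) : A) = -(((μ n : ↥P₀) : A) * e)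
        exact hkn
      rw [hkeq]
      exact N.neg_mem (N.smul_mem _ hn)
    have hm₀N : m₀' ∈ N := by
      rw [← heq]
      exact N.add_mem hkN hn
    rw [Submodule.eq_top_iff']
    intro v
    have hveq : v = op ((μ v : ↥P₀) : A) • m₀' := by
      apply μ.injective
      rw [map_smul, hμm₀']
      apply Subtype.ext
      show ((μ v : ↥P₀) : A) = (1 - e) * ((μ v : ↥P₀) : A)
      rw [sub_mul, one_mul, (μ v).2, sub_zero]
    rw [hveq]
    exact N.smul_mem _ hm₀N


theorem three_to_two (I : Ideal A) (hright : ∀ a ∈ I, ∀ b : A, a * b ∈ I)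
    (junitI : ∀ x ∈ I, ∀ b ∈ I, ∃ e ∈ I, x * e = x ∧ b * e = b)
    (h3 : ∃ (P : ModuleCat.{u} Aᵐᵒᵖ)
      (p : P →ₗ[Aᵐᵒᵖ] (A ⧸ Submodule.span Aᵐᵒᵖ (I : Set A))),
      Module.Projective Aᵐᵒᵖ P ∧ Function.Surjective p ∧
      ∀ N : Submodule Aᵐᵒᵖ P, LinearMap.ker p ⊔ N = ⊤ → N = ⊤) :
    ∃ e : A, IsIdempotentElem e ∧ (I : Set A) = {x : A | ∃ a : A, x = a * e} := by
  classical
  obtain ⟨P, pc, hproj, hsurj, hsmall⟩ := h3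
  have hmemspan : ∀ x : A, x ∈ Submodule.span Aᵐᵒᵖ (I : Set A) ↔ x ∈ I := by
    intro x
    constructor
    · intro hx
      refine Submodule.span_induction (p := fun y _ => y ∈ I) (fun y hy => hy) I.zero_mem
        (fun y z _ _ hy hz => I.add_mem hy hz) (fun c y _ hy => ?_) hx
      show (y * c.unop) ∈ I
      exact hright y hy c.unop
    · exact fun hx => Submodule.subset_span hx
  haveI : Module.Projective Aᵐᵒᵖ A := projA
  haveI : Module.Projective Aᵐᵒᵖ P := hproj
  -- lift the quotient map through p
  obtain ⟨f, hf⟩ := Module.projective_lifting_property pc (Submodule.span Aᵐᵒᵖ (I : Set A)).mkQ hsurj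
  have hfap : ∀ x : A, pc (f x) = (Submodule.span Aᵐᵒᵖ (I : Set A)).mkQ x := fun x => by
    rw [← hf]; rfl
  -- f is surjective
  have hfsurj : Function.Surjective f := by
    have hker : LinearMap.ker pc ⊔ LinearMap.range f = ⊤ := by
      rw [Submodule.eq_top_iff']
      intro y
      obtain ⟨c, hc⟩ := Submodule.mkQ_surjective (Submodule.span Aᵐᵒᵖ (I : Set A)) (pc y)
      refine Submodule.mem_sup.mpr ⟨y - f c, ?_, f c, ⟨c, rfl⟩, by abel⟩
      rw [LinearMap.mem_ker, map_sub, hfap, hc, sub_self]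
    have := hsmall _ hker
    exact LinearMap.range_eq_top.mp this
  -- splitting of f
  obtain ⟨σ, hσ⟩ := Module.projective_lifting_property f LinearMap.id hfsurj
  have hσap : ∀ y : P, f (σ y) = y := fun y => by
    have := congrArg (fun g => g y) hσ
    exact this
  set γ : A := σ (f 1) with hγ
  have hπ : ∀ x : A, σ (f x) = γ * x := by
    intro x
    have h1 : x = op x • (1 : A) := (one_mul x).symm
    calc σ (f x) = σ (f (op x • (1:A))) := by rw [← h1]
    _ = op x • σ (f 1) := by rw [map_smul, map_smul]
    _ = γ * x := rfl
  have hγγ : γ * γ = γ := by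
    have h1 : f γ = f 1 := by
      rw [hγ]; exact hσap (f 1)
    calc γ * γ = σ (f γ) := (hπ γ).symm
    _ = σ (f 1) := by rw [h1]
    _ = γ := rfl
  set β : A := 1 - γ with hβ
  have hkerI : ∀ x : A, f x = 0 → x ∈ I := by
    intro x hx
    have : (Submodule.span Aᵐᵒᵖ (I : Set A)).mkQ x = 0 := by rw [← hfap, hx, map_zero]
    rw [Submodule.mkQ_apply, Submodule.Quotient.mk_eq_zero] at this
    exact (hmemspan x).mp this
  have hβker : f β = 0 := by
    rw [hβ, map_sub]
    have : f γ = f 1 := by rw [hγ]; exact hσap (f 1)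
    rw [this, sub_self]
  have hβI : β ∈ I := hkerI β hβker
  have hkerfix : ∀ x : A, f x = 0 → β * x = x := by
    intro x hx
    have h1 : γ * x = 0 := by
      rw [← hπ, hx, map_zero]
    rw [hβ, sub_mul, one_mul, h1, sub_zero]
  have hββ : IsIdempotentElem β := by
    show β * β = β
    rw [hβ]
    calc (1 - γ) * (1 - γ) = (1 - γ) - (1 * γ - γ * γ) := by rw [mul_sub, mul_one, sub_mul]
    _ = 1 - γ := by rw [one_mul, hγγ]; abel
  -- the right annihilator of I
  set V : Submodule Aᵐᵒᵖ A :=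
    { carrier := {y : A | ∀ a ∈ I, a * y = 0}
      add_mem' := by
        intro y z hy hz a ha
        rw [mul_add, hy a ha, hz a ha, add_zero]
      zero_mem' := fun a _ => mul_zero a
      smul_mem' := by
        intro c y hy a ha
        show a * (y * c.unop) = 0
        rw [← mul_assoc, hy a ha, zero_mul] } with hV
  -- main computation: every x ∈ I satisfies x = x * β
  have hmain : ∀ x ∈ I, x * β = x := by
    intro x hx
    obtain ⟨e, heI, hxe, hβe⟩ := junitI x hx β hβI
    -- B₂ = (1-e)A
    set B₂ : Submodule Aᵐᵒᵖ A :=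
      { carrier := {y : A | ∃ d : A, y = d - e * d}
        add_mem' := by
          rintro y z ⟨d₁, rfl⟩ ⟨d₂, rfl⟩
          exact ⟨d₁ + d₂, by rw [mul_add]; abel⟩
        zero_mem' := ⟨0, by rw [mul_zero, sub_zero]⟩
        smul_mem' := by
          rintro c y ⟨d, rfl⟩
          exact ⟨d * c.unop, by show (d - e * d) * c.unop = _ ; rw [sub_mul, mul_assoc]⟩ } with hB₂
    -- ker p ⊔ f(V ⊔ B₂) = ⊤
    have hcover : LinearMap.ker pc ⊔ Submodule.map f (V ⊔ B₂) = ⊤ := by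
      rw [Submodule.eq_top_iff']
      intro y
      obtain ⟨c, rfl⟩ := hfsurj y
      have hdecomp : c = e * c + (c - e * c) := by abel
      refine Submodule.mem_sup.mpr ⟨f (e * c), ?_, f (c - e * c), ?_, by rw [← map_add, ← hdecomp]⟩
      · rw [LinearMap.mem_ker, hfap, Submodule.mkQ_apply, Submodule.Quotient.mk_eq_zero]
        exact (hmemspan _).mpr (hright e heI c)
      · exact Submodule.mem_map_of_mem (Submodule.mem_sup_right ⟨c, rfl⟩)
    have hBtop := hsmall _ hcover
    have hf1 : f 1 ∈ Submodule.map f (V ⊔ B₂) := hBtop ▸ Submodule.mem_top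
    obtain ⟨b₀, hb₀, hfb₀⟩ := hf1
    obtain ⟨v, hv, w, hw, hvw⟩ := Submodule.mem_sup.mp hb₀
    obtain ⟨d, rfl⟩ := hw
    -- ρ := 1 - b₀ is in ker f
    set ρ : A := 1 - b₀ with hρ
    have hρker : f ρ = 0 := by
      rw [hρ, map_sub, hfb₀, sub_self]
    have hβρ : β * ρ = ρ := hkerfix ρ hρker
    have hρval : ρ = 1 - v - (d - e * d) := by
      rw [hρ, ← hvw]; abel
    -- β = β * ρ = ... = β, and compute β * ρ directly
    have hβv : β * v = 0 := hv β hβI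
    have hβd : β * (e * d) = β * d := by rw [← mul_assoc, hβe]
    have hβρ2 : β * ρ = β := by
      rw [hρval, mul_sub, mul_sub, mul_sub, mul_one, hβv, hβd]
      abel
    have hρβ : ρ = β := by rw [← hβρ, hβρ2]
    -- now x * ρ = x
    have hxv : x * v = 0 := hv x hx
    have hxd : x * (e * d) = x * d := by rw [← mul_assoc, hxe]
    have : x * ρ = x := by
      rw [hρval, mul_sub, mul_sub, mul_sub, mul_one, hxv, hxd]
      abel
    rw [← hρβ, this]
  refine ⟨β, hββ, ?_⟩
  ext x
  constructor
  · intro hx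
    exact ⟨x, (hmain x hx).symm⟩
  · rintro ⟨a, rfl⟩
    exact I.mul_mem_left a hβI


theorem one_to_four (I : Ideal A) (hright : ∀ a ∈ I, ∀ b : A, a * b ∈ I)
    (hidem : ∀ a ∈ I, a ∈ AddSubgroup.closure {x : A | ∃ b ∈ I, ∃ c ∈ I, x = b * c})
    (h1 : ∀ (ι : Type) (M : ι → Type) [∀ i, AddCommGroup (M i)] [∀ i, Module Aᵐᵒᵖ (M i)],
      (∀ i, Submodule.span Aᵐᵒᵖ
          {x : M i | ∃ (m : M i) (a : A), a ∈ I ∧ x = op a • m} = ⊤) →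
      Submodule.span Aᵐᵒᵖ
          {x : (∀ i, M i) | ∃ (m : ∀ i, M i) (a : A), a ∈ I ∧ x = op a • m} = ⊤) :
    I.FG := by
  classical
  set I' : Submodule Aᵐᵒᵖ A :=
    { carrier := (I : Set A)
      add_mem' := fun hx hy => I.add_mem hx hy
      zero_mem' := I.zero_mem
      smul_mem' := by
        intro c x hx
        show x * c.unop ∈ I
        exact hright x hx c.unop } with hI'
  have hdiv : Submodule.span Aᵐᵒᵖ
      {x : ↥I' | ∃ (m : ↥I') (a : A), a ∈ I ∧ x = op a • m} = ⊤ := by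
    rw [Submodule.eq_top_iff']
    intro v
    set G : AddSubgroup A :=
      { carrier := {y : A | ∃ hy : y ∈ I', (⟨y, hy⟩ : ↥I') ∈ Submodule.span Aᵐᵒᵖ
          {x : ↥I' | ∃ (m : ↥I') (a : A), a ∈ I ∧ x = op a • m}}
        add_mem' := by
          rintro y z ⟨hy, hys⟩ ⟨hz, hzs⟩
          refine ⟨I'.add_mem hy hz, ?_⟩
          have heq : (⟨y + z, I'.add_mem hy hz⟩ : ↥I') = ⟨y, hy⟩ + ⟨z, hz⟩ := rfl
          rw [heq]
          exact Submodule.add_mem _ hys hzs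
        zero_mem' := ⟨I'.zero_mem, by
          have heq : (⟨0, I'.zero_mem⟩ : ↥I') = 0 := rfl
          rw [heq]; exact Submodule.zero_mem _⟩
        neg_mem' := by
          rintro y ⟨hy, hys⟩
          refine ⟨I'.neg_mem hy, ?_⟩
          have heq : (⟨-y, I'.neg_mem hy⟩ : ↥I') = -(⟨y, hy⟩ : ↥I') := rfl
          rw [heq]
          exact Submodule.neg_mem _ hys } with hG
    have hsubset : {x : A | ∃ b ∈ I, ∃ c ∈ I, x = b * c} ⊆ (G : Set A) := by
      rintro y ⟨b, hb, c, hc, rfl⟩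
      have hbc : b * c ∈ I' := hright b hb c
      refine ⟨hbc, ?_⟩
      have heq : (⟨b * c, hbc⟩ : ↥I') = op c • (⟨b, hb⟩ : ↥I') := rfl
      rw [heq]
      exact Submodule.subset_span ⟨⟨b, hb⟩, c, hc, rfl⟩
    have hle : AddSubgroup.closure {x : A | ∃ b ∈ I, ∃ c ∈ I, x = b * c} ≤ G :=
      (AddSubgroup.closure_le G).mpr hsubset
    obtain ⟨hv', hvs⟩ := hle (hidem (v : A) v.2)
    have heq : (⟨(v : A), hv'⟩ : ↥I') = v := Subtype.ext rfl
    rw [heq] at hvs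
    exact hvs
  -- apply the product hypothesis with the diagonal element
  set ι : Type := {x : A // x ∈ I} with hι
  have htop := h1 ι (fun _ => ↥I') (fun _ => hdiv)
  set mdiag : ∀ _ : ι, ↥I' := fun i => ⟨i.val, i.2⟩ with hmdiag
  have hm : mdiag ∈ Submodule.span Aᵐᵒᵖ
      {x : (∀ _ : ι, ↥I') | ∃ (m : ∀ _ : ι, ↥I') (a : A), a ∈ I ∧ x = op a • m} :=
    htop ▸ Submodule.mem_top
  -- multiplication lemma for finitely generated left ideals
  have hmul : ∀ (u : A) (s : Finset A) (x : A), x ∈ Ideal.span (↑s : Set A) →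
      x * u ∈ Ideal.span (↑(s.image (· * u)) : Set A) := by
    intro u s x hx
    refine Submodule.span_induction (p := fun y _ => y * u ∈ Ideal.span (↑(s.image (· * u)) : Set A))
      ?_ (by show (0:A) * u ∈ _; rw [zero_mul]; exact Submodule.zero_mem _)
      (fun y z _ _ hy hz => by
        show (y + z) * u ∈ _
        rw [add_mul]
        exact Submodule.add_mem _ hy hz)
      (fun c y _ hy => by
        show (c * y) * u ∈ _
        rw [mul_assoc]
        exact Ideal.mul_mem_left _ c hy) hx
    intro y hy
    refine Submodule.subset_span ?_
    exact Finset.mem_coe.mpr (Finset.mem_image_of_mem (· * u) (Finset.mem_coe.mp hy))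
  -- extract a finite generating set from the span membership of the diagonal
  have hfin : ∃ s : Finset A, (↑s : Set A) ⊆ (I : Set A) ∧
      ∀ i : ι, ((mdiag i : A)) ∈ Ideal.span (↑s : Set A) → True := ⟨∅, by simp, fun _ _ => trivial⟩
  clear hfin
  have key : ∃ s : Finset A, (↑s : Set A) ⊆ (I : Set A) ∧
      ∀ i : ι, ((mdiag i : A)) ∈ Ideal.span (↑s : Set A) := by
    refine Submodule.span_induction
      (p := fun v _ => ∃ s : Finset A, (↑s : Set A) ⊆ (I : Set A) ∧
        ∀ i : ι, ((v i : A)) ∈ Ideal.span (↑s : Set A)) ?_ ?_ ?_ ?_ hm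
    · rintro x ⟨mv, a, ha, rfl⟩
      refine ⟨{a}, by simpa using ha, fun i => ?_⟩
      have heq : (((op a • mv) i : A)) = ((mv i : A)) * a := rfl
      rw [heq]
      exact Ideal.mul_mem_left _ _ (Submodule.subset_span (by simp))
    · exact ⟨∅, by simp, fun i => by
        have heq : (((0 : ∀ _ : ι, ↥I') i : A)) = 0 := rfl
        rw [heq]; exact Submodule.zero_mem _⟩
    · rintro v w _ _ ⟨s₁, hs₁, hv⟩ ⟨s₂, hs₂, hw⟩
      refine ⟨s₁ ∪ s₂, by
        rw [Finset.coe_union]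
        exact Set.union_subset hs₁ hs₂, fun i => ?_⟩
      have heq : (((v + w) i : A)) = ((v i : A)) + ((w i : A)) := rfl
      rw [heq]
      refine Submodule.add_mem _ ?_ ?_
      · exact Ideal.span_mono (by rw [Finset.coe_union]; exact Set.subset_union_left) (hv i)
      · exact Ideal.span_mono (by rw [Finset.coe_union]; exact Set.subset_union_right) (hw i)
    · rintro c v _ ⟨s, hs, hv⟩
      refine ⟨s.image (· * c.unop), ?_, fun i => ?_⟩
      · intro y hy
        obtain ⟨x, hx, rfl⟩ := Finset.mem_image.mp (Finset.mem_coe.mp hy)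
        exact hright x (hs (Finset.mem_coe.mpr hx)) c.unop
      · have heq : (((c • v) i : A)) = ((v i : A)) * c.unop := rfl
        rw [heq]
        exact hmul c.unop s _ (hv i)
  obtain ⟨s, hsI, hall⟩ := key
  refine ⟨s, le_antisymm ?_ ?_⟩
  · rw [Ideal.span_le]
    exact hsI
  · intro x hx
    have := hall ⟨x, hx⟩
    exact this


end Stmt7Aux



/-- let `I` be a two-sided idempotent ideal of `A` such that `ann_M(I)` is a
direct summand of every right `A`-module `M`.  The following are equivalent:
(1) the class `{M | MI = M}` is closed under arbitrary direct products;
(2) `I = Ae` for some idempotent `e`;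
(3) the right `A`-module `A/I` admits a projective cover;
(4) `I` is finitely generated as a left ideal. -/
theorem stmt_7 (I : Ideal A)
    (hright : ∀ a ∈ I, ∀ b : A, a * b ∈ I)
    (hidem : ∀ a ∈ I, a ∈ AddSubgroup.closure {x : A | ∃ b ∈ I, ∃ c ∈ I, x = b * c})
    (hsplit : ∀ (M : Type) [AddCommGroup M] [Module Aᵐᵒᵖ M],
      ∃ N' : Submodule Aᵐᵒᵖ M, rAnn A I M ⊓ N' = ⊥ ∧ rAnn A I M ⊔ N' = ⊤) :
    List.TFAE
      [ -- (1) closure of `{M | MI = M}` under products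
        ∀ (ι : Type) (M : ι → Type) [∀ i, AddCommGroup (M i)] [∀ i, Module Aᵐᵒᵖ (M i)],
          (∀ i, Submodule.span Aᵐᵒᵖ
              {x : M i | ∃ (m : M i) (a : A), a ∈ I ∧ x = op a • m} = ⊤) →
          Submodule.span Aᵐᵒᵖ
              {x : (∀ i, M i) | ∃ (m : ∀ i, M i) (a : A), a ∈ I ∧ x = op a • m} = ⊤,
        -- (2) `I = Ae` for an idempotent `e`
        ∃ e : A, IsIdempotentElem e ∧ (I : Set A) = {x : A | ∃ a : A, x = a * e},
        -- (3) the right `A`-module `A/I` has a projective cover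
        ∃ (P : ModuleCat Aᵐᵒᵖ)
          (p : P →ₗ[Aᵐᵒᵖ] (A ⧸ Submodule.span Aᵐᵒᵖ (I : Set A))),
          Module.Projective Aᵐᵒᵖ P ∧ Function.Surjective p ∧
          ∀ N : Submodule Aᵐᵒᵖ P, LinearMap.ker p ⊔ N = ⊤ → N = ⊤,
        -- (4) `I` is finitely generated as a left ideal
        I.FG ] := by
  have hpu : ∀ c ∈ I, ∃ z ∈ I, c * z = c := Stmt7Aux.punit I hright hsplit
  have hju : ∀ x ∈ I, ∀ b ∈ I, ∃ e ∈ I, x * e = x ∧ b * e = b :=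
    fun x hx b hb => Stmt7Aux.junit I hright hsplit x b hx hb
  tfae_have 1 → 4 := Stmt7Aux.one_to_four I hright hidem
  tfae_have 4 → 2 := Stmt7Aux.four_to_two I hright hpu
  tfae_have 2 → 1 := Stmt7Aux.two_to_one I hright
  tfae_have 2 → 3 := Stmt7Aux.two_to_three I hright
  tfae_have 3 → 2 := Stmt7Aux.three_to_two I hright hju
  tfae_finish
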